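/- For any tree frame F = F_{ξη}[A] (ξ ∈ {i, r}, η ∈ {n, t}) with 0 ∉ A: Log(N_ω(F)) ⊆ Log(F). -/

import Mathlib

set_option autoImplicit false

/-- Modal formulas with `n` modalities (propositional letters indexed by `ℕ`). -/
inductive MFormula (n : ℕ) : Type
  | prop : ℕ → MFormula n
  | bot  : MFormula n
  | imp  : MFormula n → MFormula n → MFormula n
  | box  : Fin n → MFormula n → MFormula n

namespace MFormula

/-- Negation as an abbreviation: ¬φ := φ → ⊥. -/
def neg {n : ℕ} (φ : MFormula n) : MFormula n := φ.imp .bot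

/-- Uniform substitution of formulas for propositional letters. -/
def subst {n : ℕ} (s : ℕ → MFormula n) : MFormula n → MFormula n
  | prop p  => s p
  | bot     => bot
  | imp φ ψ => imp (φ.subst s) (ψ.subst s)
  | box i φ => box i (φ.subst s)

end MFormula

/-- A classical tautology: true under every boolean valuation of formulas
(a valuation respecting `⊥` and `→`, arbitrary on letters and boxed formulas). -/
def IsTautology {n : ℕ} (φ : MFormula n) : Prop :=
  ∀ v : MFormula n → Prop,
    ¬ v .bot → (∀ ψ χ : MFormula n, v (ψ.imp χ) ↔ (v ψ → v χ)) → v φ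

/-- Normal modal logics with `n` modalities. -/
structure IsNormalLogic {n : ℕ} (L : Set (MFormula n)) : Prop where
  taut : ∀ φ : MFormula n, IsTautology φ → φ ∈ L
  kax : ∀ (i : Fin n) (p q : MFormula n),
    ((MFormula.box i (p.imp q)).imp ((MFormula.box i p).imp (MFormula.box i q))) ∈ L
  mp : ∀ φ ψ : MFormula n, φ.imp ψ ∈ L → φ ∈ L → ψ ∈ L
  subst : ∀ (φ : MFormula n) (s : ℕ → MFormula n), φ ∈ L → φ.subst s ∈ L
  nec : ∀ (i : Fin n) (φ : MFormula n), φ ∈ L → MFormula.box i φ ∈ L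

/-- The smallest normal logic containing `Γ`. -/
def NormalClosure {n : ℕ} (Γ : Set (MFormula n)) : Set (MFormula n) :=
  ⋂₀ {L : Set (MFormula n) | IsNormalLogic L ∧ Γ ⊆ L}

/-- The axiom □p → ¬□¬p. -/
def dAx : MFormula 1 :=
  (MFormula.box 0 (.prop 0)).imp (MFormula.neg (MFormula.box 0 (MFormula.neg (.prop 0))))

/-- The axiom □p → p. -/
def tAx : MFormula 1 := (MFormula.box 0 (.prop 0)).imp (.prop 0)

/-- The axiom □p → □□p. -/
def fourAx : MFormula 1 :=
  (MFormula.box 0 (.prop 0)).imp (MFormula.box 0 (MFormula.box 0 (.prop 0)))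

def LogicK : Set (MFormula 1) := NormalClosure ∅
def LogicD : Set (MFormula 1) := NormalClosure (LogicK ∪ {dAx})
def LogicT : Set (MFormula 1) := NormalClosure (LogicK ∪ {tAx})
def LogicD4 : Set (MFormula 1) := NormalClosure (LogicD ∪ {fourAx})
def LogicS4 : Set (MFormula 1) := NormalClosure (LogicT ∪ {fourAx})

/-- Translation of a unimodal formula into the bimodal language, replacing □ by □_i. -/
def trTo (i : Fin 2) : MFormula 1 → MFormula 2
  | .prop p  => .prop p
  | .bot     => .bot
  | .imp φ ψ => .imp (trTo i φ) (trTo i ψ)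
  | .box _ φ => .box i (trTo i φ)

/-- The fusion `L₁ ⊗ L₂` of two unimodal logics: the smallest bimodal normal logic
containing the translation of `L₁` (□ ↦ □₁) and of `L₂` (□ ↦ □₂). -/
def Fusion (L₁ L₂ : Set (MFormula 1)) : Set (MFormula 2) :=
  NormalClosure (trTo 0 '' L₁ ∪ trTo 1 '' L₂)

/-- Truth in a Kripke model. -/
def kSat {n : ℕ} {W : Type} (R : Fin n → W → W → Prop) (V : ℕ → Set W) :
    W → MFormula n → Prop
  | w, .prop p  => w ∈ V p
  | _, .bot     => False
  | w, .imp φ ψ => kSat R V w φ → kSat R V w ψ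
  | w, .box i φ => ∀ v : W, R i w v → kSat R V v φ

/-- The logic of a Kripke `n`-frame. -/
def KLogn {n : ℕ} {W : Type} [Nonempty W] (R : Fin n → W → W → Prop) :
    Set (MFormula n) :=
  {φ | ∀ (V : ℕ → Set W) (w : W), kSat R V w φ}

/-- The logic of a unimodal Kripke frame. -/
def KLog {W : Type} [Nonempty W] (R : W → W → Prop) : Set (MFormula 1) :=
  KLogn (fun _ => R)

/-- The logic of a bimodal Kripke frame. -/
def KLog2 {W : Type} [Nonempty W] (R₁ R₂ : W → W → Prop) : Set (MFormula 2) :=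
  KLogn ![R₁, R₂]

/-- Truth in a (monotone) neighborhood model: `x ⊨ □_i φ` iff the truth set of `φ`
belongs to the filter `τ i x`. -/
def nSat {n : ℕ} {X : Type} (τ : Fin n → X → Filter X) (V : ℕ → Set X) :
    X → MFormula n → Prop
  | x, .prop p  => x ∈ V p
  | _, .bot     => False
  | x, .imp φ ψ => nSat τ V x φ → nSat τ V x ψ
  | x, .box i φ => {y | nSat τ V y φ} ∈ τ i x

/-- The logic of a neighborhood `n`-frame. -/
def NLogn {n : ℕ} {X : Type} [Nonempty X] (τ : Fin n → X → Filter X) :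
    Set (MFormula n) :=
  {φ | ∀ (V : ℕ → Set X) (x : X), nSat τ V x φ}

/-- The logic of a unimodal neighborhood frame. -/
def NLog {X : Type} [Nonempty X] (τ : X → Filter X) : Set (MFormula 1) :=
  NLogn (fun _ => τ)

/-- The logic of a neighborhood 2-frame. -/
def NLog2 {X : Type} [Nonempty X] (τ₁ τ₂ : X → Filter X) : Set (MFormula 2) :=
  NLogn ![τ₁, τ₂]

/-- Validity of a unimodal formula in a neighborhood frame. -/
def NValid {X : Type} (τ : X → Filter X) (φ : MFormula 1) : Prop :=
  ∀ (V : ℕ → Set X) (x : X), nSat (fun _ => τ) V x φ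

/-- The neighborhood frame `N(F)` of a Kripke frame `F = (W, R)`:
`τ(w)` is the principal filter of `R(w)`. -/
def nOfK {W : Type} (R : W → W → Prop) (w : W) : Filter W :=
  Filter.principal {v | R w v}

/-- Bounded morphisms between neighborhood frames (with neighborhood functions
indexed by `ι`). -/
def IsNdMorphism {ι X Y : Type} (τ : ι → X → Filter X) (σ : ι → Y → Filter Y)
    (f : X → Y) : Prop :=
  Function.Surjective f ∧
    ∀ (i : ι) (x : X),
      (∀ U ∈ τ i x, f '' U ∈ σ i (f x)) ∧
      (∀ V ∈ σ i (f x), ∃ U ∈ τ i x, f '' U ⊆ V)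

/-- First neighborhood function of the product of two neighborhood frames:
`U ∈ τ'_1(x₁,x₂)` iff `∃ V ∈ τ₁ x₁, V × {x₂} ⊆ U`. -/
def prodTau1 {X₁ X₂ : Type} (τ₁ : X₁ → Filter X₁) (p : X₁ × X₂) :
    Filter (X₁ × X₂) :=
  (τ₁ p.1).map (fun x => (x, p.2))

/-- Second neighborhood function of the product of two neighborhood frames:
`U ∈ τ'_2(x₁,x₂)` iff `∃ V ∈ τ₂ x₂, {x₁} × V ⊆ U`. -/
def prodTau2 {X₁ X₂ : Type} (τ₂ : X₂ → Filter X₂) (p : X₁ × X₂) :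
    Filter (X₁ × X₂) :=
  (τ₂ p.2).map (fun y => (p.1, y))

/-- The successor relation on finite sequences: `a R b` iff `b = a·x` for some `x ∈ A`. -/
def sucRel (A : Type) (a b : List A) : Prop := ∃ x : A, b = a ++ [x]

/-- The four kinds of tree frames: irreflexive/reflexive, non-transitive/transitive. -/
inductive TreeKind : Type
  | inn  -- irreflexive non-transitive: F_in
  | rn   -- reflexive non-transitive: F_rn (reflexive closure)
  | itr  -- irreflexive transitive: F_it (transitive closure)
  | rt   -- reflexive transitive: F_rt (reflexive-transitive closure)

/-- The relation of the tree frame `F_{ξη}[A]` on `A*`. -/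
def treeRel (A : Type) : TreeKind → List A → List A → Prop
  | .inn => sucRel A
  | .rn  => fun a b => a = b ∨ sucRel A a b
  | .itr => Relation.TransGen (sucRel A)
  | .rt  => Relation.ReflTransGen (sucRel A)

/-- First relation of the product frame `F₁ ⊗ F₂` on `(A ⊔ B)*`:
`x R'_1 y` iff `y = x·z` for some `z ∈ A*` with `Λ R₁ z`. -/
def prodRel1 (A B : Type) (k : TreeKind) (x y : List (A ⊕ B)) : Prop :=
  ∃ z : List A, treeRel A k [] z ∧ y = x ++ z.map Sum.inl

/-- Second relation of the product frame `F₁ ⊗ F₂` on `(A ⊔ B)*`. -/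
def prodRel2 (A B : Type) (k : TreeKind) (x y : List (A ⊕ B)) : Prop :=
  ∃ z : List B, treeRel B k [] z ∧ y = x ++ z.map Sum.inr

/-- Pseudo-infinite sequences over `A ∪ {0}` (with `0` modelled by `none`, so
automatically `0 ∉ A`) that are eventually `0`. -/
def PSeq (A : Type) : Type :=
  {α : ℕ → Option A // ∃ N, ∀ k ≥ N, α k = none}

instance {A : Type} : Nonempty (PSeq A) := ⟨⟨fun _ => none, 0, fun _ _ => rfl⟩⟩

/-- `st(α)`: the least `N` such that `α` has only zeros from position `N` on. -/
noncomputable def PSeq.st {A : Type} (α : PSeq A) : ℕ :=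
  sInf {N | ∀ k ≥ N, α.1 k = none}

/-- `f_F(α)`: the finite sequence obtained from `α` by deleting all zeros. -/
noncomputable def PSeq.forget {A : Type} (α : PSeq A) : List A :=
  ((List.range α.st).map α.1).reduceOption

/-- The basic neighborhood `U_k(α)` of `α`, relative to the relation `R` on `A*`:
`{β ∈ X : α|_m = β|_m and f_F(α) R f_F(β)}` where `m = max(k, st(α))`. -/
def Unbhd {A : Type} (R : List A → List A → Prop) (k : ℕ) (α : PSeq A) :
    Set (PSeq A) :=
  {β | (∀ i < max k α.st, α.1 i = β.1 i) ∧ R α.forget β.forget}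

/-- The neighborhood function of `N_ω(F)`: `τ(α)` is the filter generated by the
base `{U_k(α) : k ∈ ℕ}`. -/
noncomputable def nOmega {A : Type} (R : List A → List A → Prop) (α : PSeq A) :
    Filter (PSeq A) :=
  ⨅ k : ℕ, Filter.principal (Unbhd R k α)

/-- The interleaving `x₁ y₁ x₂ y₂ …` of two pseudo-infinite sequences. -/
def interleave {A B : Type} (α : PSeq A) (β : PSeq B) : PSeq (A ⊕ B) :=
  ⟨fun n => if n % 2 = 0 then (α.1 (n / 2)).map Sum.inl
            else (β.1 (n / 2)).map Sum.inr, by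
    obtain ⟨N₁, h₁⟩ := α.2
    obtain ⟨N₂, h₂⟩ := β.2
    refine ⟨2 * max N₁ N₂, fun k hk => ?_⟩
    have hdiv : max N₁ N₂ ≤ k / 2 := by omega
    by_cases h : k % 2 = 0
    · simp [h, h₁ (k / 2) (le_trans (le_max_left _ _) hdiv)]
    · simp [h, h₂ (k / 2) (le_trans (le_max_right _ _) hdiv)]⟩

/-- The map `g`: delete all zeros from the interleaving of `α` and `β`. -/
noncomputable def gMap {A B : Type} (p : PSeq A × PSeq B) : List (A ⊕ B) :=
  (interleave p.1 p.2).forget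

/-! ### Auxiliary lemmas for Statement 9 -/

lemma PSeq.st_spec {A : Type} (α : PSeq A) : ∀ k ≥ α.st, α.1 k = none := by
  have h : α.st ∈ {N | ∀ k ≥ N, α.1 k = none} := Nat.sInf_mem α.2
  exact h

lemma reduceOption_range_get? {A : Type} (l : List A) :
    ((List.range l.length).map (fun i => l[i]?)).reduceOption = l := by
  induction l with
  | nil => simp
  | cons a l ih =>
    rw [List.length_cons, List.range_succ_eq_map, List.map_cons, List.map_map]
    have : (fun i => (a :: l)[i]?) ∘ Nat.succ = (fun i => l[i]?) := by funext i; rfl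
    simp [this, ih]

lemma reduceOption_replicate_none {A : Type} (n : ℕ) :
    (List.replicate n (none : Option A)).reduceOption = [] := by
  induction n with
  | zero => simp
  | succ m ih => simp [List.replicate_succ, List.reduceOption_cons_of_none, ih]

lemma PSeq.forget_eq_of {A : Type} (α : PSeq A) (N : ℕ)
    (h : ∀ k ≥ N, α.1 k = none) :
    α.forget = ((List.range N).map α.1).reduceOption := by
  have hst : α.st ≤ N := Nat.sInf_le h
  unfold PSeq.forget
  obtain ⟨d, rfl⟩ := Nat.exists_eq_add_of_le hst
  rw [List.range_add, List.map_append, List.reduceOption_append, List.map_map]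
  have hz : ((List.range d).map (α.1 ∘ fun x => α.st + x)).reduceOption = [] := by
    have : (List.range d).map (α.1 ∘ fun x => α.st + x) =
        (List.range d).map (fun _ => (none : Option A)) := by
      apply List.map_congr_left
      intro i _
      exact α.st_spec _ (Nat.le_add_right _ _)
    rw [this, List.map_const', List.length_range, reduceOption_replicate_none]
  rw [hz, List.append_nil]

/-- Extend `α` beyond position `m` by the list `z` (zeros after that). -/
def extendSeq {A : Type} (α : PSeq A) (m : ℕ) (z : List A) : PSeq A :=
  ⟨fun n => if n < m then α.1 n else z[n - m]?,
   ⟨m + z.length, fun k hk => by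
      have h1 : ¬ k < m := by omega
      simp only [h1, if_false]
      exact List.getElem?_eq_none (by omega)⟩⟩

lemma forget_extend {A : Type} (α : PSeq A) (m : ℕ) (z : List A)
    (hm : α.st ≤ m) : (extendSeq α m z).forget = α.forget ++ z := by
  rw [PSeq.forget_eq_of (extendSeq α m z) (m + z.length)
      (fun k hk => by
        have h1 : ¬ k < m := by omega
        simp only [extendSeq, h1, if_false]
        exact List.getElem?_eq_none (by omega))]
  rw [List.range_add, List.map_append, List.reduceOption_append, List.map_map]
  congr 1
  · rw [PSeq.forget_eq_of α m (fun k hk => α.st_spec k (le_trans hm hk))]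
    apply congrArg
    apply List.map_congr_left
    intro i hi
    simp only [extendSeq, List.mem_range.1 hi, if_true]
  · have : (List.range z.length).map ((extendSeq α m z).1 ∘ fun x => m + x) =
        (List.range z.length).map (fun i => z[i]?) := by
      apply List.map_congr_left
      intro i _
      simp only [extendSeq, Function.comp_apply]
      have h1 : ¬ m + i < m := by omega
      simp only [h1, if_false]
      congr 1
      omega
    rw [this, reduceOption_range_get?]

/-- Embed a finite sequence as a pseudo-infinite sequence. -/
def embedSeq {A : Type} (w : List A) : PSeq A :=
  ⟨fun i => w[i]?, ⟨w.length, fun k hk => List.getElem?_eq_none hk⟩⟩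

lemma forget_embed {A : Type} (w : List A) : (embedSeq w).forget = w := by
  rw [PSeq.forget_eq_of (embedSeq w) w.length
      (fun k hk => List.getElem?_eq_none hk)]
  exact reduceOption_range_get? w

lemma treeRel_prefix {A : Type} (tk : TreeKind) {a b : List A}
    (h : treeRel A tk a b) : ∃ z, b = a ++ z := by
  cases tk with
  | inn => obtain ⟨x, rfl⟩ := h; exact ⟨[x], rfl⟩
  | rn =>
    rcases h with rfl | ⟨x, rfl⟩
    · exact ⟨[], (List.append_nil a).symm⟩
    · exact ⟨[x], rfl⟩
  | itr =>
    induction h with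
    | single h => obtain ⟨x, rfl⟩ := h; exact ⟨[x], rfl⟩
    | tail _ h ih =>
      obtain ⟨z, rfl⟩ := ih
      obtain ⟨x, rfl⟩ := h
      exact ⟨z ++ [x], by simp⟩
  | rt =>
    induction h with
    | refl => exact ⟨[], (List.append_nil a).symm⟩
    | tail _ h ih =>
      obtain ⟨z, rfl⟩ := ih
      obtain ⟨x, rfl⟩ := h
      exact ⟨z ++ [x], by simp⟩

lemma Unbhd_anti {A : Type} (R : List A → List A → Prop) {k k' : ℕ}
    (h : k ≤ k') (α : PSeq A) : Unbhd R k' α ⊆ Unbhd R k α := by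
  rintro β ⟨h1, h2⟩
  exact ⟨fun i hi => h1 i (lt_of_lt_of_le hi (max_le_max h le_rfl)), h2⟩

lemma mem_nOmega {A : Type} (R : List A → List A → Prop) (α : PSeq A)
    (S : Set (PSeq A)) : S ∈ nOmega R α ↔ ∃ k, Unbhd R k α ⊆ S := by
  rw [nOmega, Filter.mem_iInf_of_directed]
  · simp only [Filter.mem_principal]
  · intro k k'
    exact ⟨max k k',
      Filter.principal_mono.2 (Unbhd_anti R (le_max_left _ _) α),
      Filter.principal_mono.2 (Unbhd_anti R (le_max_right _ _) α)⟩

lemma truth_lemma {A : Type} (tk : TreeKind) (V : ℕ → Set (List A))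
    (φ : MFormula 1) : ∀ α : PSeq A,
    nSat (fun _ => nOmega (treeRel A tk))
      (fun p => {β : PSeq A | β.forget ∈ V p}) α φ ↔
    kSat (fun _ => treeRel A tk) V α.forget φ := by
  induction φ with
  | prop p => intro α; exact Iff.rfl
  | bot => intro α; exact Iff.rfl
  | imp φ ψ ihφ ihψ =>
    intro α
    simp only [nSat, kSat, ihφ, ihψ]
  | box i φ ih =>
    intro α
    simp only [nSat, kSat]
    constructor
    · intro h b hb
      rw [mem_nOmega] at h
      obtain ⟨k, hk⟩ := h
      obtain ⟨z, rfl⟩ := treeRel_prefix tk hb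
      set m := max k α.st with hm
      have hβ : extendSeq α m z ∈ Unbhd (treeRel A tk) k α := by
        refine ⟨fun i hi => ?_, ?_⟩
        · simp only [extendSeq]
          rw [if_pos hi]
        · rw [forget_extend α m z (le_max_right _ _)]
          exact hb
      have h2 := (ih (extendSeq α m z)).1 (hk hβ)
      rwa [forget_extend α m z (le_max_right _ _)] at h2
    · intro h
      rw [mem_nOmega]
      refine ⟨0, fun β hβ => ?_⟩
      exact (ih β).2 (h β.forget hβ.2)

/-- For any tree frame `F = F_{ξη}[A]`: `Log(N_ω(F)) ⊆ Log(F)`. -/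
theorem log_nOmega_subset (A : Type) [Nonempty A] (tk : TreeKind) :
    NLog (nOmega (treeRel A tk)) ⊆ KLog (treeRel A tk) := by
  intro φ hφ V w
  have h := hφ (fun p => {β : PSeq A | β.forget ∈ V p}) (embedSeq w)
  rw [truth_lemma tk V φ (embedSeq w), forget_embed] at h
  exact h
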